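/- Let H be a real Hilbert space, Y a normed space, and ι : H → Y an injective continuous linear map. Let T > 0 and let f : [0,T] → H be a function such that sup_{t ∈ [0,T]} ‖f(t)‖_H < ∞ and such that the composition ι ∘ f : [0,T] → Y is continuous. Then f is weakly continuous: for every v ∈ H, the map t ↦ ⟪f(t), v⟫_H is continuous on [0,T]. -/

import Mathlib

open scoped RealInnerProductSpace

/-- Strauss-type weak-continuity lemma: if `H` is a real Hilbert space, `Y` a normed
space, `ι : H → Y` an injective continuous linear map, and `f : [0,T] → H` is bounded
with `ι ∘ f` continuous, then `f` is weakly continuous on `[0,T]`. -/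
theorem weakly_continuous_of_bounded_of_continuous_embedding
    {H Y : Type*} [NormedAddCommGroup H] [InnerProductSpace ℝ H] [CompleteSpace H]
    [NormedAddCommGroup Y] [NormedSpace ℝ Y]
    (ι : H →L[ℝ] Y) (hinj : Function.Injective ι)
    (T : ℝ) (hT : 0 < T) (f : ℝ → H)
    (hbd : ∃ M : ℝ, ∀ t ∈ Set.Icc (0 : ℝ) T, ‖f t‖ ≤ M)
    (hcont : ContinuousOn (fun t => ι (f t)) (Set.Icc (0 : ℝ) T)) :
    ∀ v : H, ContinuousOn (fun t => ⟪f t, v⟫) (Set.Icc (0 : ℝ) T) := by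
  obtain ⟨M, hM⟩ := hbd
  have hM0 : 0 ≤ M := le_trans (norm_nonneg _) (hM 0 ⟨le_refl 0, le_of_lt hT⟩)
  -- the linear map sending φ ∈ Y* to the Riesz representative of φ ∘ ι
  let A : (Y →L[ℝ] ℝ) →ₗ[ℝ] H :=
    { toFun := fun φ => (InnerProductSpace.toDual ℝ H).symm (φ.comp ι)
      map_add' := fun φ ψ => by
        rw [ContinuousLinearMap.add_comp, map_add]
      map_smul' := fun c φ => by
        rw [ContinuousLinearMap.smul_comp, map_smul, RingHom.id_apply] }
  have hA : ∀ (φ : Y →L[ℝ] ℝ) (w : H), ⟪A φ, w⟫ = φ (ι w) := fun φ w =>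
    InnerProductSpace.toDual_symm_apply
  set S : Submodule ℝ H := LinearMap.range A with hS
  -- S is dense
  have horth : Sᗮ = ⊥ := by
    rw [Submodule.eq_bot_iff]
    intro w hw
    have hw' : ∀ φ : Y →L[ℝ] ℝ, φ (ι w) = 0 := by
      intro φ
      have := hw (A φ) ⟨φ, rfl⟩
      rwa [hA] at this
    have : ι w = 0 := NormedSpace.eq_zero_of_forall_dual_eq_zero ℝ hw'
    have : ι w = ι 0 := by simpa using this
    exact hinj this
  have hdense : S.topologicalClosure = ⊤ :=
    Submodule.topologicalClosure_eq_top_iff.mpr horth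
  intro v
  have hv : v ∈ closure (S : Set H) := by
    have : v ∈ S.topologicalClosure := hdense ▸ Submodule.mem_top
    exact this
  obtain ⟨u, hu_mem, hu_lim⟩ := mem_closure_iff_seq_limit.mp hv
  -- each approximant gives a continuous function
  have hcont_n : ∀ n, ContinuousOn (fun t => ⟪f t, u n⟫) (Set.Icc (0 : ℝ) T) := by
    intro n
    obtain ⟨φ, hφ⟩ := hu_mem n
    have : (fun t => ⟪f t, u n⟫) = fun t => φ (ι (f t)) := by
      funext t
      rw [real_inner_comm, ← hφ, hA]
    rw [this]
    exact φ.continuous.comp_continuousOn hcont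
  -- uniform convergence
  have hunif : TendstoUniformlyOn (fun n t => ⟪f t, u n⟫) (fun t => ⟪f t, v⟫)
      Filter.atTop (Set.Icc (0 : ℝ) T) := by
    rw [Metric.tendstoUniformlyOn_iff]
    intro ε hε
    have hlim : Filter.Tendsto (fun n => M * ‖v - u n‖) Filter.atTop (nhds 0) := by
      have h1 : Filter.Tendsto (fun n => v - u n) Filter.atTop (nhds 0) := by
        simpa using ((tendsto_const_nhds (x := v)).sub hu_lim)
      have h2 : Filter.Tendsto (fun n => ‖v - u n‖) Filter.atTop (nhds 0) := by
        simpa using h1.norm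
      simpa using h2.const_mul M
    have := (hlim.eventually (gt_mem_nhds hε))
    filter_upwards [this] with n hn t ht
    have key : dist ⟪f t, v⟫ ⟪f t, u n⟫ = |⟪f t, v - u n⟫| := by
      rw [Real.dist_eq, inner_sub_right]
    rw [key]
    calc |⟪f t, v - u n⟫| ≤ ‖f t‖ * ‖v - u n‖ := abs_real_inner_le_norm _ _
      _ ≤ M * ‖v - u n‖ := by
          exact mul_le_mul_of_nonneg_right (hM t ht) (norm_nonneg _)
      _ < ε := hn
  exact hunif.continuousOn (Filter.Frequently.of_forall hcont_n)
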